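/- Assume f is symmetric, unimodal, bounded by M, and that C := ∫_0^∞ u² g(u)²/(G(u)(1-G(u))) du is finite and positive. Then λ³ I(λ) is bounded between two positive constants as λ → ∞; i.e., I(λ) = Θ(λ^{-3}) and hence √I(λ) = Θ(λ^{-3/2}). -/

import Mathlib

open MeasureTheory Set
open scoped ENNReal

/-- Scaling substitution for set lintegrals over `Ioi 0`. -/
lemma scale_lintegral_Ioi (a : ℝ) (ha : 0 < a) (F : ℝ → ℝ≥0∞) :
    ∫⁻ y in Ioi (0:ℝ), F (a * y) = ENNReal.ofReal a⁻¹ * ∫⁻ u in Ioi (0:ℝ), F u := by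
  have hmeas : MeasurableSet (Ioi (0:ℝ)) := measurableSet_Ioi
  have key : ∀ y : ℝ, (Ioi (0:ℝ)).indicator (fun y => F (a * y)) y
      = (Ioi (0:ℝ)).indicator F (a * y) := by
    intro y
    by_cases hy : y ∈ Ioi (0:ℝ)
    · rw [indicator_of_mem hy]
      exact (indicator_of_mem (mem_Ioi.2 (mul_pos ha hy)) F).symm
    · rw [indicator_of_notMem hy]
      refine (indicator_of_notMem ?_ F).symm
      simp only [mem_Ioi, not_lt] at hy ⊢
      exact mul_nonpos_of_nonneg_of_nonpos ha.le hy
  rw [← lintegral_indicator hmeas, ← lintegral_indicator hmeas]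
  simp_rw [key]
  have hmap := lintegral_map_equiv (μ := volume) ((Ioi (0:ℝ)).indicator F) (MeasurableEquiv.mulLeft₀ a ha.ne')
  simp only [MeasurableEquiv.coe_mulLeft₀] at hmap
  calc ∫⁻ y, (Ioi (0:ℝ)).indicator F (a * y)
      = ∫⁻ x, (Ioi (0:ℝ)).indicator F x
          ∂(Measure.map (a * ·) volume) := hmap.symm
    _ = ∫⁻ x, (Ioi (0:ℝ)).indicator F x ∂(ENNReal.ofReal |a⁻¹| • volume) := by
        rw [Real.map_volume_mul_left ha.ne']
    _ = ENNReal.ofReal a⁻¹ * ∫⁻ x, (Ioi (0:ℝ)).indicator F x := by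
        rw [lintegral_smul_measure, abs_of_nonneg (inv_nonneg.2 ha.le), smul_eq_mul]

/-- under boundedness and unimodality of f and finiteness and
positivity of `C = ∫_0^∞ u² g(u)²/(G(u)(1-G(u))) du`, we have I(λ) = Θ(λ^{-3}):
there are constants 0 < c₁ ≤ c₂ < ∞ and L > 0 with c₁ ≤ λ³ I(λ) ≤ c₂ for λ ≥ L. -/
theorem fisher_information_tail_order
    (f g G : ℝ → ℝ) (I : ℝ → ℝ≥0∞) (M : ℝ)
    (hf_symm : ∀ x, f (-x) = f x) (hf_bound : ∀ x, 0 < f x ∧ f x ≤ M)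
    (hf_mono : AntitoneOn f (Ici (0:ℝ))) (hf_int : ∫ x, f x = 1)
    (hg_cont : Continuous g) (hg_symm : ∀ x, g (-x) = g x)
    (hg_pos : ∀ x, 0 < g x) (hg_int : ∫ x, g x = 1)
    (hG : ∀ t, G t = ∫ u in Iic t, g u)
    (hCpos : 0 < ∫⁻ u in Ioi (0:ℝ),
        ENNReal.ofReal (u^2 * (g u)^2 / (G u * (1 - G u))))
    (hCfin : (∫⁻ u in Ioi (0:ℝ),
        ENNReal.ofReal (u^2 * (g u)^2 / (G u * (1 - G u)))) < ⊤)
    (hI : ∀ lam, I lam = 2 * ∫⁻ y in Ioi (0:ℝ),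
        ENNReal.ofReal
          (y^2 * f y * (g (lam * y))^2 / (G (lam * y) * (1 - G (lam * y))))) :
    ∃ c₁ c₂ L : ℝ, 0 < c₁ ∧ c₁ ≤ c₂ ∧ 0 < L ∧
      ∀ lam : ℝ, L ≤ lam →
        ENNReal.ofReal c₁ ≤ ENNReal.ofReal (lam^3) * I lam ∧
        ENNReal.ofReal (lam^3) * I lam ≤ ENNReal.ofReal c₂ := by
  classical
  set C := ∫⁻ u in Ioi (0:ℝ), ENNReal.ofReal (u^2 * (g u)^2 / (G u * (1 - G u))) with hC
  -- g is integrable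
  have hg_integ : Integrable g := by
    by_contra h
    rw [integral_undef h] at hg_int
    norm_num at hg_int
  have hg_supp : Function.support g = univ := by
    ext x; simp [(hg_pos x).ne']
  -- G is strictly between 0 and 1
  have hGpos : ∀ u, 0 < G u := by
    intro u
    rw [hG u]
    rw [setIntegral_pos_iff_support_of_nonneg_ae
      (Filter.Eventually.of_forall fun x => (hg_pos x).le) hg_integ.integrableOn]
    rw [hg_supp, univ_inter, Real.volume_Iic]
    simp
  have hGlt : ∀ u, G u < 1 := by
    intro u
    have hsplit : (∫ x in Iic u, g x) + ∫ x in (Iic u)ᶜ, g x = 1 := by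
      rw [integral_add_compl measurableSet_Iic hg_integ, hg_int]
    have hpos : 0 < ∫ x in (Iic u)ᶜ, g x := by
      rw [setIntegral_pos_iff_support_of_nonneg_ae
        (Filter.Eventually.of_forall fun x => (hg_pos x).le) hg_integ.integrableOn]
      rw [hg_supp, univ_inter, compl_Iic, Real.volume_Ioi]
      simp
    rw [hG u]; linarith
  have hD : ∀ u, 0 < G u * (1 - G u) := fun u =>
    mul_pos (hGpos u) (sub_pos.2 (hGlt u))
  -- G is monotone hence measurable
  have hGmono : Monotone G := by
    intro s t hst
    rw [hG s, hG t]
    exact setIntegral_mono_set hg_integ.integrableOn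
      (Filter.Eventually.of_forall fun x => (hg_pos x).le)
      (HasSubset.Subset.eventuallyLE (Iic_subset_Iic.2 hst))
  have hGmeas : Measurable G := hGmono.measurable
  have hmeasC : Measurable fun u : ℝ => ENNReal.ofReal (u^2 * (g u)^2 / (G u * (1 - G u))) := by
    refine Measurable.ennreal_ofReal ?_
    exact (((measurable_id.pow_const 2).mul (hg_cont.measurable.pow_const 2)).div
      (hGmeas.mul (measurable_const.sub hGmeas)))
  -- the small integral P over (0,1]
  set P := ∫⁻ u in Ioc (0:ℝ) 1, ENNReal.ofReal (u^2 * (g u)^2 / (G u * (1 - G u))) with hP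
  have hPleC : P ≤ C := lintegral_mono_set Ioc_subset_Ioi_self
  have hPfin : P < ⊤ := hPleC.trans_lt hCfin
  have hPpos : 0 < P := by
    rw [hP, setLIntegral_pos_iff hmeasC]
    have hsub : Ioc (0:ℝ) 1 ⊆ Function.support
        fun u : ℝ => ENNReal.ofReal (u^2 * (g u)^2 / (G u * (1 - G u))) := by
      intro u hu
      have h1 : 0 < u^2 * (g u)^2 / (G u * (1 - G u)) :=
        div_pos (mul_pos (pow_pos hu.1 2) (pow_pos (hg_pos u) 2)) (hD u)
      simp [Function.mem_support, ENNReal.ofReal_eq_zero, not_le, h1]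
    rw [inter_eq_right.2 hsub, Real.volume_Ioc]
    norm_num
  have hM0 : 0 ≤ M := ((hf_bound 0).1.trans_le (hf_bound 0).2).le
  have hf1 : 0 < f 1 := (hf_bound 1).1
  -- constants
  set A₁ : ℝ≥0∞ := 2 * ENNReal.ofReal (f 1) * P with hA₁
  set A₂ : ℝ≥0∞ := 2 * ENNReal.ofReal M * C with hA₂
  have hA₂fin : A₂ ≠ ⊤ := by
    rw [hA₂]
    exact ENNReal.mul_ne_top (ENNReal.mul_ne_top (by norm_num) ENNReal.ofReal_ne_top) hCfin.ne
  have hA₁A₂ : A₁ ≤ A₂ := by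
    rw [hA₁, hA₂]
    exact mul_le_mul' (mul_le_mul' le_rfl (ENNReal.ofReal_le_ofReal (hf_bound 1).2)) hPleC
  have hA₁fin : A₁ ≠ ⊤ := (hA₁A₂.trans_lt (lt_top_iff_ne_top.2 hA₂fin)).ne
  have hA₁pos : 0 < A₁ := by
    rw [hA₁]
    refine ENNReal.mul_pos (mul_ne_zero (by norm_num) ?_) hPpos.ne'
    simp [ENNReal.ofReal_eq_zero, not_le, hf1]
  refine ⟨A₁.toReal, A₂.toReal, 1, ENNReal.toReal_pos hA₁pos.ne' hA₁fin,
    ENNReal.toReal_mono hA₂fin hA₁A₂, one_pos, ?_⟩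
  intro lam hlam
  have hlam0 : (0:ℝ) < lam := lt_of_lt_of_le one_pos hlam
  -- the substituted integral
  set K := ∫⁻ u in Ioi (0:ℝ),
      ENNReal.ofReal (u^2 * f (u/lam) * (g u)^2 / (G u * (1 - G u))) with hK
  -- main identity : lam^3 * I lam = 2 * K
  have hmain : ENNReal.ofReal (lam^3) * I lam = 2 * K := by
    rw [hI lam]
    have hstep1 : (∫⁻ y in Ioi (0:ℝ), ENNReal.ofReal
          (y^2 * f y * (g (lam * y))^2 / (G (lam * y) * (1 - G (lam * y)))))
        = ENNReal.ofReal lam⁻¹ * ∫⁻ u in Ioi (0:ℝ), ENNReal.ofReal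
          ((u/lam)^2 * f (u/lam) * (g u)^2 / (G u * (1 - G u))) := by
      calc (∫⁻ y in Ioi (0:ℝ), ENNReal.ofReal
            (y^2 * f y * (g (lam * y))^2 / (G (lam * y) * (1 - G (lam * y)))))
          = ∫⁻ y in Ioi (0:ℝ), (fun u => ENNReal.ofReal
            ((u/lam)^2 * f (u/lam) * (g u)^2 / (G u * (1 - G u)))) (lam * y) := by
            refine lintegral_congr fun y => ?_
            simp only
            rw [mul_div_cancel_left₀ _ hlam0.ne']
        _ = _ := scale_lintegral_Ioi lam hlam0
            (fun u => ENNReal.ofReal ((u/lam)^2 * f (u/lam) * (g u)^2 / (G u * (1 - G u))))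
    rw [hstep1]
    have hstep2 : (∫⁻ u in Ioi (0:ℝ), ENNReal.ofReal
          ((u/lam)^2 * f (u/lam) * (g u)^2 / (G u * (1 - G u))))
        = ENNReal.ofReal (lam⁻¹^2) * K := by
      rw [hK, ← lintegral_const_mul' _ _ ENNReal.ofReal_ne_top]
      refine lintegral_congr fun u => ?_
      rw [← ENNReal.ofReal_mul (by positivity)]
      congr 1
      field_simp
    rw [hstep2]
    calc ENNReal.ofReal (lam^3) * (2 * (ENNReal.ofReal lam⁻¹ * (ENNReal.ofReal (lam⁻¹^2) * K)))
        = 2 * ((ENNReal.ofReal (lam^3) * ENNReal.ofReal lam⁻¹ * ENNReal.ofReal (lam⁻¹^2)) * K) := by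
          ring
      _ = 2 * (ENNReal.ofReal (lam^3 * lam⁻¹ * lam⁻¹^2) * K) := by
          rw [← ENNReal.ofReal_mul (by positivity), ← ENNReal.ofReal_mul (by positivity)]
      _ = 2 * K := by
          have : lam^3 * lam⁻¹ * lam⁻¹^2 = 1 := by field_simp
          rw [this, ENNReal.ofReal_one, one_mul]
  -- upper bound
  have hupper : K ≤ ENNReal.ofReal M * C := by
    rw [hK, hC, ← lintegral_const_mul' _ _ ENNReal.ofReal_ne_top]
    refine lintegral_mono fun u => ?_
    rw [← ENNReal.ofReal_mul hM0]
    refine ENNReal.ofReal_le_ofReal ?_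
    have hfm := (hf_bound (u/lam)).2
    have h1 : u^2 * f (u/lam) * (g u)^2 / (G u * (1 - G u))
        ≤ u^2 * M * (g u)^2 / (G u * (1 - G u)) := by
      gcongr
      exact (hD u).le
    calc u^2 * f (u/lam) * (g u)^2 / (G u * (1 - G u))
        ≤ u^2 * M * (g u)^2 / (G u * (1 - G u)) := h1
      _ = M * (u^2 * (g u)^2 / (G u * (1 - G u))) := by ring
  -- lower bound
  have hlower : ENNReal.ofReal (f 1) * P ≤ K := by
    rw [hK, hP, ← lintegral_const_mul' _ _ ENNReal.ofReal_ne_top]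
    calc ∫⁻ u in Ioc (0:ℝ) 1, ENNReal.ofReal (f 1) *
            ENNReal.ofReal (u^2 * (g u)^2 / (G u * (1 - G u)))
        ≤ ∫⁻ u in Ioc (0:ℝ) 1,
            ENNReal.ofReal (u^2 * f (u/lam) * (g u)^2 / (G u * (1 - G u))) := by
          refine lintegral_mono_ae ((ae_restrict_iff' measurableSet_Ioc).2
            (Filter.Eventually.of_forall fun u hu => ?_))
          rw [← ENNReal.ofReal_mul (hf1.le)]
          refine ENNReal.ofReal_le_ofReal ?_
          have hul : u/lam ≤ 1 := (div_le_one hlam0).2 (hu.2.trans hlam)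
          have hul0 : (0:ℝ) ≤ u/lam := le_of_lt (div_pos hu.1 hlam0)
          have hff : f 1 ≤ f (u/lam) := hf_mono hul0 (by norm_num : (1:ℝ) ∈ Ici (0:ℝ)) hul
          calc f 1 * (u^2 * (g u)^2 / (G u * (1 - G u)))
              = u^2 * f 1 * (g u)^2 / (G u * (1 - G u)) := by ring
            _ ≤ u^2 * f (u/lam) * (g u)^2 / (G u * (1 - G u)) := by
                gcongr
                exact (hD u).le
      _ ≤ ∫⁻ u in Ioi (0:ℝ),
            ENNReal.ofReal (u^2 * f (u/lam) * (g u)^2 / (G u * (1 - G u))) :=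
          lintegral_mono_set Ioc_subset_Ioi_self
  constructor
  · rw [ENNReal.ofReal_toReal hA₁fin, hmain, hA₁]
    calc 2 * ENNReal.ofReal (f 1) * P = 2 * (ENNReal.ofReal (f 1) * P) := by ring
      _ ≤ 2 * K := mul_le_mul' le_rfl hlower
  · rw [ENNReal.ofReal_toReal hA₂fin, hmain, hA₂]
    calc 2 * K ≤ 2 * (ENNReal.ofReal M * C) := mul_le_mul' le_rfl hupper
      _ = 2 * ENNReal.ofReal M * C := by ring
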